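/- Let R_k be the graph obtained from k copies of K_4 sharing a single common vertex u, and let H_{t,0}∘R_k be obtained by attaching t pendant vertices to u. If k ≥ 1 and m = 6k + t ≥ 8, then ρ(H_{t,0}∘R_k) < (1 + √(4m−3))/2. -/

import Mathlib

open Finset
open Matrix

/-- Real adjacency matrix of a simple graph. -/
noncomputable def adjMat {V : Type*} [Fintype V] (G : SimpleGraph V) : Matrix V V ℝ :=
  Matrix.of fun i j => haveI := Classical.dec (G.Adj i j); if G.Adj i j then (1 : ℝ) else 0

/-- `μ` is an eigenvalue of the adjacency matrix of `G`. -/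
def IsAdjEigenvalue {V : Type*} [Fintype V] (G : SimpleGraph V) (μ : ℝ) : Prop :=
  ∃ x : V → ℝ, x ≠ 0 ∧ (adjMat G).mulVec x = μ • x

/-- `ρ` is the spectral radius (largest adjacency eigenvalue) of `G`. -/
def IsSpecRad {V : Type*} [Fintype V] (G : SimpleGraph V) (ρ : ℝ) : Prop :=
  IsAdjEigenvalue G ρ ∧ ∀ μ : ℝ, IsAdjEigenvalue G μ → μ ≤ ρ

/-- `G` contains a copy of `F` as a subgraph. -/
def Contains {V W : Type*} (G : SimpleGraph V) (F : SimpleGraph W) : Prop :=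
  ∃ f : W → V, Function.Injective f ∧ ∀ a b, F.Adj a b → G.Adj (f a) (f b)

/-- `G` contains a cycle of length `t`. -/
def HasCycleLen {V : Type*} (G : SimpleGraph V) (t : ℕ) : Prop :=
  ∃ (v : V) (w : G.Walk v v), w.IsCycle ∧ w.length = t

/-- `HR k t` : `k` copies of `K₄` sharing the single common vertex `Sum.inl ()`,
together with `t` pendant vertices attached to that common vertex. -/
def HR (k t : ℕ) : SimpleGraph (Unit ⊕ (Fin k × Fin 3) ⊕ Fin t) :=
  SimpleGraph.fromRel (fun a b =>
    match a, b with
    | Sum.inl _, _ => True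
    | Sum.inr (Sum.inl p), Sum.inr (Sum.inl q) => p.1 = q.1
    | _, _ => False)

private lemma clique_bound (r a y0 y1 y2 : ℝ) (hr : 2 < r) :
    (r-2) * (2*a*(y0+y1+y2) + 2*(y0*y1+y0*y2+y1*y2)) ≤ 3*a^2 + (r-2)*r*(y0*y0+y1*y1+y2*y2) := by
  nlinarith [sq_nonneg ((r-2)*(y0+y1+y2) - 3*a), sq_nonneg (y0-y1), sq_nonneg (y0-y2),
    sq_nonneg (y1-y2),
    mul_nonneg (mul_nonneg (by linarith : (0:ℝ) ≤ r-2) (by linarith : (0:ℝ) ≤ r+1)) (sq_nonneg (y0-y1)),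
    mul_nonneg (mul_nonneg (by linarith : (0:ℝ) ≤ r-2) (by linarith : (0:ℝ) ≤ r+1)) (sq_nonneg (y0-y2)),
    mul_nonneg (mul_nonneg (by linarith : (0:ℝ) ≤ r-2) (by linarith : (0:ℝ) ≤ r+1)) (sq_nonneg (y1-y2))]

private lemma cross_bound (y0 y1 y2 : ℝ) :
    2*0*(y0+y1+y2) + 2*(y0*y1+y0*y2+y1*y2) ≤ 2*(y0*y0+y1*y1+y2*y2) := by
  nlinarith [sq_nonneg (y0-y1), sq_nonneg (y0-y2), sq_nonneg (y1-y2)]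

private lemma pend_bound (r a z : ℝ) : r*(2*a*z) ≤ a^2 + r^2*(z*z) := by
  nlinarith [sq_nonneg (a - r*z)]

/-- the quadratic form of `HR k t` -/
private lemma HR_form (k t : ℕ) (x : (Unit ⊕ (Fin k × Fin 3) ⊕ Fin t) → ℝ) :
    x ⬝ᵥ (adjMat (HR k t)).mulVec x =
      (∑ i : Fin k, (2 * x (Sum.inl ()) * (x (Sum.inr (Sum.inl (i,0))) + x (Sum.inr (Sum.inl (i,1))) + x (Sum.inr (Sum.inl (i,2))))
        + 2 * (x (Sum.inr (Sum.inl (i,0))) * x (Sum.inr (Sum.inl (i,1)))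
             + x (Sum.inr (Sum.inl (i,0))) * x (Sum.inr (Sum.inl (i,2)))
             + x (Sum.inr (Sum.inl (i,1))) * x (Sum.inr (Sum.inl (i,2))))))
      + ∑ j : Fin t, 2 * x (Sum.inl ()) * x (Sum.inr (Sum.inr j)) := by
  have e1 : ∀ w : (Fin k × Fin 3) ⊕ Fin t, adjMat (HR k t) (Sum.inl ()) (Sum.inr w) = 1 := by
    intro w; simp [adjMat, HR, SimpleGraph.fromRel_adj]
  have e2 : ∀ w : (Fin k × Fin 3) ⊕ Fin t, adjMat (HR k t) (Sum.inr w) (Sum.inl ()) = 1 := by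
    intro w; simp [adjMat, HR, SimpleGraph.fromRel_adj]
  have e0 : adjMat (HR k t) (Sum.inl ()) (Sum.inl ()) = 0 := by
    simp [adjMat, HR, SimpleGraph.fromRel_adj]
  have e3 : ∀ (i i' : Fin k) (j j' : Fin 3),
      adjMat (HR k t) (Sum.inr (Sum.inl (i,j))) (Sum.inr (Sum.inl (i',j'))) =
      if i = i' then (if j = j' then 0 else 1) else 0 := by
    intro i i' j j'
    simp [adjMat, HR, SimpleGraph.fromRel_adj]
    split_ifs <;> simp_all
  have e4 : ∀ (p : Fin k × Fin 3) (j : Fin t),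
      adjMat (HR k t) (Sum.inr (Sum.inl p)) (Sum.inr (Sum.inr j)) = 0 := by
    intro p j; simp [adjMat, HR, SimpleGraph.fromRel_adj]
  have e5 : ∀ (i j : Fin t), adjMat (HR k t) (Sum.inr (Sum.inr i)) (Sum.inr (Sum.inr j)) = 0 := by
    intro i j; simp [adjMat, HR, SimpleGraph.fromRel_adj]
  have e6 : ∀ (j : Fin t) (p : Fin k × Fin 3),
      adjMat (HR k t) (Sum.inr (Sum.inr j)) (Sum.inr (Sum.inl p)) = 0 := by
    intro j p; simp [adjMat, HR, SimpleGraph.fromRel_adj]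
  simp only [dotProduct, Matrix.mulVec, Fintype.sum_sum_type, Fintype.sum_prod_type,
    Finset.univ_unique, Finset.sum_singleton, PUnit.default_eq_unit, e0, e1, e2, e3, e4, e5, e6,
    Fin.sum_univ_three, one_mul, zero_mul, mul_zero, mul_ite, ite_mul, add_zero, zero_add,
    Finset.sum_ite_eq, Finset.mem_univ, if_true, mul_one]
  simp only [Fin.isValue, Fin.reduceEq, reduceIte, if_false, Finset.sum_const_zero, add_zero,
    zero_add]
  simp only [mul_add, add_mul, Finset.mul_sum, Finset.sum_add_distrib, mul_ite, mul_zero,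
    ite_self, Finset.sum_ite_eq, Finset.sum_ite_eq', Finset.mem_univ, if_true,
    Finset.sum_const_zero, add_zero, zero_add]
  simp only [mul_comm, mul_left_comm, mul_assoc]
  simp only [← Finset.mul_sum]
  ring

private lemma HR_norm (k t : ℕ) (x : (Unit ⊕ (Fin k × Fin 3) ⊕ Fin t) → ℝ) :
    x ⬝ᵥ x =
      x (Sum.inl ()) * x (Sum.inl ())
      + (∑ i : Fin k, (x (Sum.inr (Sum.inl (i,0))) * x (Sum.inr (Sum.inl (i,0)))
          + x (Sum.inr (Sum.inl (i,1))) * x (Sum.inr (Sum.inl (i,1)))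
          + x (Sum.inr (Sum.inl (i,2))) * x (Sum.inr (Sum.inl (i,2)))))
      + ∑ j : Fin t, x (Sum.inr (Sum.inr j)) * x (Sum.inr (Sum.inr j)) := by
  simp only [dotProduct, Fintype.sum_sum_type, Fintype.sum_prod_type,
    Finset.univ_unique, Finset.sum_singleton, PUnit.default_eq_unit, Fin.sum_univ_three]
  ring

set_option maxHeartbeats 2000000 in
theorem stmt12 (k t m : ℕ) (hk : 1 ≤ k) (hm : m = 6 * k + t) (h8 : 8 ≤ m)
    (ρ : ℝ) (hρ : IsSpecRad (HR k t) ρ) :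
    ρ < (1 + Real.sqrt (4 * m - 3)) / 2 := by
  set r : ℝ := (1 + Real.sqrt (4 * m - 3)) / 2 with hr_def
  -- basic facts about r
  have hm8 : (8:ℝ) ≤ (m:ℝ) := by exact_mod_cast h8
  have hs0 : (0:ℝ) ≤ 4 * (m:ℝ) - 3 := by linarith
  have hs2 : Real.sqrt (4 * m - 3) ^ 2 = 4 * (m:ℝ) - 3 := Real.sq_sqrt hs0
  have hs5 : (5:ℝ) < Real.sqrt (4 * m - 3) := by
    nlinarith [Real.sqrt_nonneg (4 * (m:ℝ) - 3)]
  have hr3 : (3:ℝ) < r := by rw [hr_def]; linarith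
  have hrsq : r ^ 2 = r + ((m:ℝ) - 1) := by
    rw [hr_def]; field_simp; nlinarith [hs2]
  -- the key cubic inequality
  have hkR : (1:ℝ) ≤ (k:ℝ) := by exact_mod_cast hk
  have h5 : (5:ℝ) ≤ 3 * (k:ℝ) + (t:ℝ) := by
    have : 5 ≤ 3 * k + t := by omega
    exact_mod_cast this
  have hmR : (m:ℝ) = 6 * (k:ℝ) + (t:ℝ) := by rw [hm]; push_cast; ring
  have hcub : 3 * (k:ℝ) * r + (t:ℝ) * (r - 2) < r^2 * (r - 2) := by
    have h32 : (0:ℝ) < 3 * (k:ℝ) - 2 := by linarith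
    nlinarith [mul_pos h32 (by linarith : (0:ℝ) < r - 3), hrsq]
  clear_value r
  -- eigenvector
  obtain ⟨⟨x, hx0, hEig⟩, -⟩ := hρ
  set a : ℝ := x (Sum.inl ()) with ha_def
  set Ny : ℝ := ∑ i : Fin k, (x (Sum.inr (Sum.inl (i,0))) * x (Sum.inr (Sum.inl (i,0)))
      + x (Sum.inr (Sum.inl (i,1))) * x (Sum.inr (Sum.inl (i,1)))
      + x (Sum.inr (Sum.inl (i,2))) * x (Sum.inr (Sum.inl (i,2)))) with hNy_def
  set Nz : ℝ := ∑ j : Fin t, x (Sum.inr (Sum.inr j)) * x (Sum.inr (Sum.inr j)) with hNz_def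
  set Q : ℝ := x ⬝ᵥ (adjMat (HR k t)).mulVec x with hQ_def
  set SC : ℝ := ∑ i : Fin k, (2 * a * (x (Sum.inr (Sum.inl (i,0))) + x (Sum.inr (Sum.inl (i,1))) + x (Sum.inr (Sum.inl (i,2))))
      + 2 * (x (Sum.inr (Sum.inl (i,0))) * x (Sum.inr (Sum.inl (i,1)))
           + x (Sum.inr (Sum.inl (i,0))) * x (Sum.inr (Sum.inl (i,2)))
           + x (Sum.inr (Sum.inl (i,1))) * x (Sum.inr (Sum.inl (i,2))))) with hSC_def
  set SP : ℝ := ∑ j : Fin t, 2 * a * x (Sum.inr (Sum.inr j)) with hSP_def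
  clear_value Ny Nz Q SC SP
  have hN : x ⬝ᵥ x = a * a + Ny + Nz := by
    rw [hNy_def, hNz_def, ha_def]; exact HR_norm k t x
  have hQ' : Q = SC + SP := by
    rw [hQ_def, hSC_def, hSP_def, ha_def]; exact HR_form k t x
  have hNy0 : 0 ≤ Ny := by
    rw [hNy_def]
    exact Finset.sum_nonneg fun i _ =>
      add_nonneg (add_nonneg (mul_self_nonneg _) (mul_self_nonneg _)) (mul_self_nonneg _)
  have hNz0 : 0 ≤ Nz := by
    rw [hNz_def]
    exact Finset.sum_nonneg fun j _ => mul_self_nonneg _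
  have hNpos : 0 < x ⬝ᵥ x := by
    obtain ⟨v, hv⟩ := Function.ne_iff.mp hx0
    calc (0:ℝ) < x v * x v := mul_self_pos.mpr hv
      _ ≤ ∑ w, x w * x w :=
        Finset.single_le_sum (fun w _ => mul_self_nonneg (x w)) (Finset.mem_univ v)
      _ = x ⬝ᵥ x := rfl
  have hQρ : Q = ρ * (x ⬝ᵥ x) := by
    rw [hQ_def, hEig, dotProduct_smul, smul_eq_mul]
  -- clique and pendant bounds
  have hSC2 : a = 0 → SC ≤ 2 * Ny := by
    intro ha
    rw [hSC_def, hNy_def, Finset.mul_sum]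
    refine Finset.sum_le_sum fun i _ => ?_
    rw [ha]
    exact cross_bound _ _ _
  have hSP0 : a = 0 → SP = 0 := by
    intro ha
    rw [hSP_def]; simp [ha]
  have hCs : (r - 2) * SC ≤ (3 * (k:ℝ)) * a^2 + (r-2) * r * Ny := by
    rw [hSC_def, hNy_def, Finset.mul_sum]
    calc ∑ i : Fin k, ((r-2) * (2 * a * (x (Sum.inr (Sum.inl (i,0))) + x (Sum.inr (Sum.inl (i,1))) + x (Sum.inr (Sum.inl (i,2))))
          + 2 * (x (Sum.inr (Sum.inl (i,0))) * x (Sum.inr (Sum.inl (i,1)))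
               + x (Sum.inr (Sum.inl (i,0))) * x (Sum.inr (Sum.inl (i,2)))
               + x (Sum.inr (Sum.inl (i,1))) * x (Sum.inr (Sum.inl (i,2))))))
        ≤ ∑ i : Fin k, (3*a^2 + (r-2) * r * (x (Sum.inr (Sum.inl (i,0))) * x (Sum.inr (Sum.inl (i,0)))
          + x (Sum.inr (Sum.inl (i,1))) * x (Sum.inr (Sum.inl (i,1)))
          + x (Sum.inr (Sum.inl (i,2))) * x (Sum.inr (Sum.inl (i,2))))) :=
          Finset.sum_le_sum fun i _ => clique_bound r a _ _ _ (by linarith)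
      _ = (3 * (k:ℝ)) * a^2 + (r-2) * r * ∑ i : Fin k, (x (Sum.inr (Sum.inl (i,0))) * x (Sum.inr (Sum.inl (i,0)))
          + x (Sum.inr (Sum.inl (i,1))) * x (Sum.inr (Sum.inl (i,1)))
          + x (Sum.inr (Sum.inl (i,2))) * x (Sum.inr (Sum.inl (i,2)))) := by
          rw [Finset.sum_add_distrib, Finset.sum_const, ← Finset.mul_sum, Finset.card_univ,
            Fintype.card_fin, nsmul_eq_mul]
          ring
  have hPs : r * SP ≤ (t:ℝ) * a^2 + r^2 * Nz := by
    rw [hSP_def, hNz_def, Finset.mul_sum]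
    calc ∑ j : Fin t, r * (2 * a * x (Sum.inr (Sum.inr j)))
        ≤ ∑ j : Fin t, (a^2 + r^2 * (x (Sum.inr (Sum.inr j)) * x (Sum.inr (Sum.inr j)))) :=
          Finset.sum_le_sum fun j _ => pend_bound r a _
      _ = (t:ℝ) * a^2 + r^2 * ∑ j : Fin t, x (Sum.inr (Sum.inr j)) * x (Sum.inr (Sum.inr j)) := by
          rw [Finset.sum_add_distrib, Finset.sum_const, ← Finset.mul_sum, Finset.card_univ,
            Fintype.card_fin, nsmul_eq_mul]
  -- now forget the graph structure
  set X : ℝ := x ⬝ᵥ x with hX_def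
  clear_value X a
  -- (set already folded X everywhere)
  clear hX_def hNy_def hNz_def hQ_def hSC_def hSP_def hEig hx0 hm hmR h8 hm8 hs0 hs2 hs5 hk hkR ha_def x
  -- scalar endgame
  have hQlt : Q < r * X := by
    by_cases ha : a = 0
    · have h0 := hSP0 ha
      have h1 := hSC2 ha
      rw [ha] at hN
      have hpos : (0:ℝ) < (r - 2) * X := mul_pos (by linarith) hNpos
      nlinarith [h0, h1, hpos, hNz0, hQ', hN]
    · have ha2 : 0 < a ^ 2 := by positivity
      have h1 : r * ((r-2) * SC) ≤ r * ((3 * (k:ℝ)) * a^2 + (r-2) * r * Ny) :=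
        mul_le_mul_of_nonneg_left hCs (by linarith)
      have h2 : (r-2) * (r * SP) ≤ (r-2) * ((t:ℝ) * a^2 + r^2 * Nz) :=
        mul_le_mul_of_nonneg_left hPs (by linarith)
      have h3 : (3 * (k:ℝ) * r + (t:ℝ) * (r - 2)) * a^2 < (r^2 * (r - 2)) * a^2 :=
        mul_lt_mul_of_pos_right hcub ha2
      have hbig : (r * (r-2)) * Q < (r * (r-2)) * (r * X) := by
        rw [hQ', hN]
        nlinarith [h1, h2, h3]
      have hrr : (0:ℝ) ≤ r * (r-2) := by nlinarith [hr3]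
      exact lt_of_mul_lt_mul_left hbig hrr
  rw [hQρ] at hQlt
  exact lt_of_mul_lt_mul_right hQlt hNpos.le
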